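/- A sometimes ψ-ontic ontological model cannot be maximally ψ-epistemic. Concretely: let μ and ν be probability measures on a measurable space (Λ, Σ) and suppose that for every finite type ι and every family of measurable functions f_i : Λ → ℝ (i ∈ ι) with f_i ≥ 0 and Σ_{i ∈ ι} f_i(λ) = 1 for every λ, and for every measurable set Ω with ν(Ω) = 1, one has ∫_Ω f_i dμ = ∫_Λ f_i dμ for every i ∈ ι. Then there is no measurable set Ω' with μ(Ω') > 0 and ν(Ω') = 0. -/

import Mathlib

open MeasureTheory

/-- A sometimes ψ-ontic ontological model cannot be maximally ψ-epistemic: if for every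
finite measurement (family of nonnegative measurable response functions summing to one
pointwise) and every measurable set `Ω` of `ν`-measure one, the integral of each response
function over `Ω` against `μ` equals the full integral, then there is no measurable set
`Ω'` with `μ Ω' > 0` and `ν Ω' = 0`. -/
theorem stmt18 {Λ : Type*} [MeasurableSpace Λ]
    (μ ν : Measure Λ) [IsProbabilityMeasure μ] [IsProbabilityMeasure ν]
    (hME : ∀ (ι : Type) [Fintype ι], ∀ f : ι → Λ → ℝ,
      (∀ i, Measurable (f i)) → (∀ i l, 0 ≤ f i l) → (∀ l, ∑ i, f i l = 1) →
      ∀ Ω : Set Λ, MeasurableSet Ω → ν Ω = 1 →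
        ∀ i, ∫ l in Ω, f i l ∂μ = ∫ l, f i l ∂μ) :
    ¬ ∃ Ω' : Set Λ, MeasurableSet Ω' ∧ 0 < μ Ω' ∧ ν Ω' = 0 := by
  rintro ⟨Ω', hΩ'm, hμ, hν⟩
  set f : Bool → Λ → ℝ := fun b => if b then Ω'.indicator 1 else Ω'ᶜ.indicator 1 with hf
  have hmeas : ∀ b, Measurable (f b) := by
    intro b
    cases b <;> simp only [hf, if_true, if_false] <;>
      exact (measurable_const.indicator (by measurability))
  have hnonneg : ∀ b l, 0 ≤ f b l := by
    intro b l
    cases b <;> simp [hf] <;> exact Set.indicator_nonneg (fun _ _ => zero_le_one) l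
  have hsum : ∀ l, ∑ b, f b l = 1 := by
    intro l
    simp only [Fintype.sum_bool, hf, if_true, if_false]
    by_cases h : l ∈ Ω' <;> simp [Set.indicator_apply, h]
  have hνc : ν Ω'ᶜ = 1 := by
    rw [measure_compl hΩ'm (measure_ne_top ν Ω'), hν, measure_univ]
    simp
  have key := hME Bool f hmeas hnonneg hsum Ω'ᶜ hΩ'm.compl hνc true
  simp only [hf, if_true] at key
  have hfin : μ Ω' ≠ ⊤ := measure_ne_top μ Ω'
  have h1 : ∫ l, Ω'.indicator (1 : Λ → ℝ) l ∂μ = (μ Ω').toReal := by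
    rw [integral_indicator hΩ'm]
    simp [Measure.restrict_apply_univ, Measure.real]
  have h2 : ∫ l in Ω'ᶜ, Ω'.indicator (1 : Λ → ℝ) l ∂μ = 0 := by
    rw [integral_indicator hΩ'm]
    simp [Measure.real, Measure.restrict_apply hΩ'm]
  rw [h1, h2] at key
  have : (μ Ω').toReal ≠ 0 := by
    simp [ENNReal.toReal_eq_zero_iff, hμ.ne', hfin]
  exact this key.symm
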